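/- Let n be a natural number, let r, θ ∈ [0,1] with r ≤ θ, and define the one-sided p-value p(k) := F_{n,r-tail}(k) = Σ_{j=0}^{k} (n choose j) r^j (1−r)^{n−j} for k ∈ {0,…,n}. If K is distributed according to the Binomial(n, θ) distribution (e.g. the Mathlib binomial PMF with success probability θ), then for every α ∈ [0,1], Pr(p(K) ≤ α) ≤ α. That is, the exact one-sided binomial p-value for testing the null hypothesis θ ≥ r is valid (superuniform) under the null. -/

import Mathlib

open MeasureTheory

private noncomputable def Gf (n k : ℕ) (t : ℝ) : ℝ :=
  ∑ j ∈ Finset.range (k + 1), (n.choose j : ℝ) * t ^ j * (1 - t) ^ (n - j)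

private lemma Gf_term_nonneg {t : ℝ} (ht0 : 0 ≤ t) (ht1 : t ≤ 1) (n j : ℕ) :
    0 ≤ (n.choose j : ℝ) * t ^ j * (1 - t) ^ (n - j) := by
  have : (0:ℝ) ≤ 1 - t := by linarith
  positivity

private lemma Gf_mono_k {t : ℝ} (ht0 : 0 ≤ t) (ht1 : t ≤ 1) (n : ℕ) :
    Monotone (fun k => Gf n k t) := by
  apply monotone_nat_of_le_succ
  intro k
  unfold Gf
  apply Finset.sum_le_sum_of_subset_of_nonneg
  · exact Finset.range_subset_range.2 (by omega)
  · intro j _ _; exact Gf_term_nonneg ht0 ht1 n j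

private lemma Gf_top {t : ℝ} (n k : ℕ) (h : n ≤ k) : Gf n k t = 1 := by
  unfold Gf
  have : ∑ j ∈ Finset.range (k + 1), (n.choose j : ℝ) * t ^ j * (1 - t) ^ (n - j)
      = ∑ j ∈ Finset.range (n + 1), (n.choose j : ℝ) * t ^ j * (1 - t) ^ (n - j) := by
    apply (Finset.sum_subset (Finset.range_subset_range.2 (by omega)) _).symm
    intro j _ hj
    rw [Finset.mem_range] at hj
    have : n.choose j = 0 := Nat.choose_eq_zero_of_lt (by omega)
    simp [this]
  rw [this]
  have := add_pow t (1 - t) n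
  have h1 : t + (1 - t) = 1 := by ring
  rw [h1, one_pow] at this
  refine Eq.trans (Finset.sum_congr rfl fun j _ => by ring) this.symm

private lemma Gf_rec (n k : ℕ) (t : ℝ) (h : k + 1 ≤ n) :
    Gf (n + 1) (k + 1) t = (1 - t) * Gf n (k + 1) t + t * Gf n k t := by
  unfold Gf
  have hsplit : ∀ j ∈ Finset.range (k + 2),
      ((n+1).choose j : ℝ) * t ^ j * (1 - t) ^ (n + 1 - j)
      = (n.choose j : ℝ) * t ^ j * (1 - t) ^ (n + 1 - j)
        + (if j = 0 then 0 else (n.choose (j-1) : ℝ) * t ^ j * (1 - t) ^ (n + 1 - j)) := by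
    intro j hj
    rcases Nat.eq_zero_or_pos j with hj0 | hj0
    · subst hj0; simp
    · obtain ⟨i, rfl⟩ := Nat.exists_eq_succ_of_ne_zero (by omega : j ≠ 0)
      rw [if_neg (by omega)]
      have hc : ((n+1).choose (i+1) : ℝ) = (n.choose (i+1) : ℝ) + (n.choose i : ℝ) := by
        rw [Nat.choose_succ_succ]; push_cast; ring
      rw [hc]
      have h1 : i + 1 - 1 = i := rfl
      rw [h1]
      ring
  rw [Finset.sum_congr rfl hsplit, Finset.sum_add_distrib]
  congr 1
  · rw [Finset.mul_sum]
    apply Finset.sum_congr rfl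
    intro j hj
    rw [Finset.mem_range] at hj
    have hjn : j ≤ n := by omega
    have : n + 1 - j = (n - j) + 1 := by omega
    rw [this]
    ring
  · rw [Finset.sum_range_succ']
    have h0 : (if (0:ℕ) = 0 then (0:ℝ) else (n.choose (0-1):ℝ) * t ^ 0 * (1-t)^(n+1-0)) = 0 := by
      simp
    rw [h0, add_zero, Finset.mul_sum]
    apply Finset.sum_congr rfl
    intro i hi
    rw [Finset.mem_range] at hi
    rw [if_neg (Nat.succ_ne_zero i)]
    simp only [Nat.add_sub_cancel]
    have h2 : n + 1 - (i + 1) = n - i := by omega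
    rw [h2]
    ring

private lemma Gf_anti (n : ℕ) : ∀ (k : ℕ) {t s : ℝ}, 0 ≤ t → t ≤ s → s ≤ 1 →
    Gf n k s ≤ Gf n k t := by
  induction n with
  | zero =>
    intro k t s _ _ _
    rw [Gf_top 0 k (by omega), Gf_top 0 k (by omega)]
  | succ n ih =>
    intro k t s ht hts hs
    by_cases hk : n + 1 ≤ k
    · rw [Gf_top _ _ hk, Gf_top _ _ hk]
    · match k with
      | 0 =>
        have e : ∀ u : ℝ, Gf (n+1) 0 u = (1-u)^(n+1) := by
          intro u; unfold Gf; simp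
        rw [e, e]
        apply pow_le_pow_left₀ (by linarith) (by linarith)
      | k + 1 =>
        have hk' : k + 1 ≤ n := by omega
        rw [Gf_rec n k t hk', Gf_rec n k s hk']
        have h0s : 0 ≤ s := le_trans ht hts
        have ht1 : t ≤ 1 := le_trans hts hs
        have A := ih (k+1) ht hts hs
        have B := ih k ht hts hs
        have C : Gf n k t ≤ Gf n (k+1) t := Gf_mono_k ht ht1 n (Nat.le_succ k)
        have p1 : 0 ≤ (1-s) * (Gf n (k+1) t - Gf n (k+1) s) :=
          mul_nonneg (by linarith) (by linarith)
        have p2 : 0 ≤ s * (Gf n k t - Gf n k s) := mul_nonneg h0s (by linarith)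
        have p3 : 0 ≤ (s-t) * (Gf n (k+1) t - Gf n k t) :=
          mul_nonneg (by linarith) (by linarith)
        nlinarith [p1, p2, p3]


/-- **Validity (superuniformity) of the exact one-sided binomial p-value.**
If `K ~ Binomial(n, θ)` with `θ ≥ r`, then the one-sided p-value
`p(k) = ∑_{j=0}^{k} C(n,j) r^j (1-r)^(n-j)` satisfies `Pr(p(K) ≤ α) ≤ α`
for every `α ∈ [0,1]`. -/
theorem binomial_pvalue_superuniform
    (n : ℕ) (r θ : ℝ) (hr : r ∈ Set.Icc (0 : ℝ) 1) (hθ : θ ∈ Set.Icc (0 : ℝ) 1)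
    (hrθ : r ≤ θ) (α : ℝ) (hα : α ∈ Set.Icc (0 : ℝ) 1) :
    ((PMF.binomial (Real.toNNReal θ) (Real.toNNReal_le_one.mpr hθ.2) n).toMeasure
        {k : Fin (n + 1) |
          ∑ j ∈ Finset.range ((k : ℕ) + 1), (n.choose j : ℝ) * r ^ j * (1 - r) ^ (n - j)
            ≤ α}).toReal
      ≤ α := by
  classical
  obtain ⟨hr0, hr1⟩ := hr
  obtain ⟨hθ0, hθ1⟩ := hθ
  obtain ⟨hα0, hα1⟩ := hα
  set P := PMF.binomial (Real.toNNReal θ) (Real.toNNReal_le_one.mpr (by exact hθ1)) n with hP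
  set T : Finset (Fin (n + 1)) := Finset.univ.filter (fun k => Gf n (k : ℕ) r ≤ α) with hT
  have hset : {k : Fin (n + 1) |
      ∑ j ∈ Finset.range ((k : ℕ) + 1), (n.choose j : ℝ) * r ^ j * (1 - r) ^ (n - j) ≤ α}
      = (T : Set (Fin (n + 1))) := by
    ext k
    simp [hT, Gf]
    exact ⟨fun h => Finset.mem_filter.2 ⟨Finset.mem_univ _, h⟩, fun h => (Finset.mem_filter.1 h).2⟩
  rw [hset, PMF.toMeasure_apply_finset]
  rcases T.eq_empty_or_nonempty with hTe | hTne
  · simp [hTe, hα0]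
  · set m := T.max' hTne with hm
    have hmT : m ∈ T := T.max'_mem hTne
    have hmα : Gf n (m : ℕ) r ≤ α := by
      have := hmT; rw [hT, Finset.mem_filter] at this; exact this.2
    have hTeq : T = Finset.univ.filter (fun k => k ≤ m) := by
      ext k
      simp only [hT, Finset.mem_filter, Finset.mem_univ, true_and]
      constructor
      · intro hk
        exact Finset.le_max' T k (by rw [hT, Finset.mem_filter]; exact ⟨Finset.mem_univ k, hk⟩)
      · intro hk
        calc Gf n (k : ℕ) r ≤ Gf n (m : ℕ) r := Gf_mono_k hr0 hr1 n (Fin.le_def.mp hk)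
          _ ≤ α := hmα
    -- compute each PMF value
    have hone : (1 : ENNReal) - ENNReal.ofReal θ = ENNReal.ofReal (1 - θ) := by
      rw [ENNReal.ofReal_sub _ hθ0, ENNReal.ofReal_one]
    have hPval : ∀ k : Fin (n + 1), (P k).toReal
        = (n.choose (k : ℕ) : ℝ) * θ ^ (k : ℕ) * (1 - θ) ^ (n - (k : ℕ)) := by
      intro k
      rw [hP, PMF.binomial_apply]
      rw [Fin.val_last, ← ENNReal.coe_one, ← ENNReal.coe_sub, ENNReal.toReal_mul,
        ENNReal.toReal_mul, ENNReal.toReal_pow, ENNReal.toReal_pow, ENNReal.coe_toReal,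
        ENNReal.coe_toReal, NNReal.coe_sub (Real.toNNReal_le_one.mpr hθ1), Real.coe_toNNReal _ hθ0,
        NNReal.coe_one, ENNReal.toReal_natCast]
      ring
    have hfin : ∀ k ∈ T, P k ≠ ⊤ := fun k _ => PMF.apply_ne_top P k
    rw [ENNReal.toReal_sum hfin]
    have hsum : ∑ k ∈ T, (P k).toReal = Gf n (m : ℕ) θ := by
      rw [hTeq]
      rw [Finset.sum_filter]
      have step1 : ∀ k : Fin (n + 1),
          (if k ≤ m then (P k).toReal else 0)
          = (fun j => if j ≤ (m : ℕ) then
              (n.choose j : ℝ) * θ ^ j * (1 - θ) ^ (n - j) else 0) (k : ℕ) := by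
        intro k
        simp only [Fin.le_def, hPval k]
      rw [Finset.sum_congr rfl (fun k _ => step1 k)]
      rw [Fin.sum_univ_eq_sum_range
        (fun j => if j ≤ (m : ℕ) then (n.choose j : ℝ) * θ ^ j * (1 - θ) ^ (n - j) else 0) (n+1)]
      rw [← Finset.sum_filter]
      have hrange : Finset.filter (fun j => j ≤ (m : ℕ)) (Finset.range (n + 1))
          = Finset.range ((m : ℕ) + 1) := by
        ext j
        simp only [Finset.mem_filter, Finset.mem_range]
        constructor
        · rintro ⟨_, h⟩; omega
        · intro h
          have := m.isLt
          exact ⟨by omega, by omega⟩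
      rw [hrange]
      rfl
    rw [hsum]
    calc Gf n (m : ℕ) θ ≤ Gf n (m : ℕ) r := Gf_anti n (m : ℕ) hr0 hrθ hθ1
      _ ≤ α := hmα
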